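/- Let C be a compact Hausdorff topological group which is an inverse limit of a directed system of compact Lie groups L_i. If the identity component L_i⁰ is abelian for every i, then the identity component C⁰ of C is abelian. -/

import Mathlib

theorem stmt17 {ι : Type*} [Preorder ι] [IsDirected ι (· ≤ ·)]
    {C : Type*} [Group C] [TopologicalSpace C] [IsTopologicalGroup C]
    [CompactSpace C] [T2Space C]
    (L : ι → Type*) [∀ i, Group (L i)] [∀ i, TopologicalSpace (L i)]
    [∀ i, IsTopologicalGroup (L i)] [∀ i, CompactSpace (L i)] [∀ i, T2Space (L i)]
    (π : ∀ i, C →* L i)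
    (hcont : ∀ i, Continuous (π i))
    (hsurj : ∀ i, Function.Surjective (π i))
    (hemb : Topology.IsEmbedding (fun c i => π i c : C → ∀ i, L i))
    (hab : ∀ i, ∀ a ∈ connectedComponent (1 : L i), ∀ b ∈ connectedComponent (1 : L i),
      a * b = b * a) :
    ∀ a ∈ connectedComponent (1 : C), ∀ b ∈ connectedComponent (1 : C), a * b = b * a := by
  intro a ha b hb
  have hinj : Function.Injective (fun c i => π i c : C → ∀ i, L i) := hemb.injective
  apply hinj
  funext i
  have hmap : ∀ x ∈ connectedComponent (1 : C), π i x ∈ connectedComponent (1 : L i) := by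
    intro x hx
    have := (hcont i).image_connectedComponent_subset (1 : C)
    rw [map_one (π i)] at this
    exact this ⟨x, hx, rfl⟩
  simp only [map_mul]
  exact hab i _ (hmap a ha) _ (hmap b hb)
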